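/- Let x be a letter of a finite alphabet A, let s be a standard episturmian word over A \ {x}, and let p be a natural number. Then every factor of the infinite word s̃_p·x·s is finite episturmian, where s_p is the prefix of s of length p and s̃_p its reversal. -/

import Mathlib

/-- The prefix of length `k` of an infinite word `t`. -/
def prefixList {A : Type*} (t : ℕ → A) (k : ℕ) : List A := (List.range k).map t

/-- `u` occurs as a factor of the infinite word `t` at position `i`. -/
def FactorAt {A : Type*} (t : ℕ → A) (u : List A) (i : ℕ) : Prop :=
  u = (List.range u.length).map (fun j => t (i + j))

/-- `u` is a (finite) factor of the infinite word `t`. -/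
def IsFactorInf {A : Type*} (t : ℕ → A) (u : List A) : Prop := ∃ i, FactorAt t u i

/-- An infinite word is recurrent if each of its factors occurs infinitely often. -/
def Recurrent {A : Type*} (t : ℕ → A) : Prop :=
  ∀ u, IsFactorInf t u → ∀ N, ∃ i, N ≤ i ∧ FactorAt t u i

/-- `u` is a right special factor of `t`. -/
def RightSpecial {A : Type*} (t : ℕ → A) (u : List A) : Prop :=
  ∃ a b : A, a ≠ b ∧ IsFactorInf t (u ++ [a]) ∧ IsFactorInf t (u ++ [b])

/-- `u` is a left special factor of `t`. -/
def LeftSpecial {A : Type*} (t : ℕ → A) (u : List A) : Prop :=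
  ∃ a b : A, a ≠ b ∧ IsFactorInf t (a :: u) ∧ IsFactorInf t (b :: u)

/-- An infinite word is episturmian if its set of factors is closed under reversal
and it has at most one right special factor of each length. -/
def Episturmian {A : Type*} (t : ℕ → A) : Prop :=
  (∀ u, IsFactorInf t u → IsFactorInf t u.reverse) ∧
  (∀ u v, RightSpecial t u → RightSpecial t v → u.length = v.length → u = v)

/-- A standard episturmian word: episturmian with all left special factors prefixes. -/
def StdEpisturmian {A : Type*} (t : ℕ → A) : Prop :=
  Episturmian t ∧ ∀ u, LeftSpecial t u → u = prefixList t u.length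

/-- A finite word is finite episturmian if it is a factor of some episturmian infinite word. -/
def FiniteEpisturmian {A : Type*} (w : List A) : Prop :=
  ∃ t : ℕ → A, Episturmian t ∧ IsFactorInf t w

/-- An acceptable pair: a strict total order `r` on `A` together with a letter `a`
that is minimal for `r`. -/
def AcceptablePair {A : Type*} (r : A → A → Prop) (a : A) : Prop :=
  IsStrictTotalOrder A r ∧ ∀ b, b ≠ a → r a b

/-- Non-strict lexicographic order on finite words induced by the order `r` on letters. -/
def listLe {A : Type*} (r : A → A → Prop) (u v : List A) : Prop := u = v ∨ List.Lex r u v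

/-- Non-strict lexicographic order on infinite words induced by the order `r` on letters. -/
def infLe {A : Type*} (r : A → A → Prop) (x y : ℕ → A) : Prop :=
  x = y ∨ ∃ i, (∀ j, j < i → x j = y j) ∧ r (x i) (y i)

/-- `m` is the lexicographically smallest factor of the finite word `w` of length `k`. -/
def IsMinFacLen {A : Type*} (r : A → A → Prop) (w : List A) (k : ℕ) (m : List A) : Prop :=
  m <:+: w ∧ m.length = k ∧ ∀ u, u <:+: w → u.length = k → listLe r m u

/-- `m` is the lexicographically greatest factor of the finite word `w` of length `k`. -/
def IsMaxFacLen {A : Type*} (r : A → A → Prop) (w : List A) (k : ℕ) (m : List A) : Prop :=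
  m <:+: w ∧ m.length = k ∧ ∀ u, u <:+: w → u.length = k → listLe r u m

/-- `m = min(w)`: for each `j ≤ |m|` the prefix of `m` of length `j` is `min(w|j)`,
and `|m|` is maximal with this chain property. -/
def IsMinFin {A : Type*} (r : A → A → Prop) (w m : List A) : Prop :=
  m ≠ [] ∧
  (∀ j, j ≤ m.length → IsMinFacLen r w j (m.take j)) ∧
  (∀ m', IsMinFacLen r w (m.length + 1) m' → ¬ m <+: m')

/-- `m = max(w)` (finite word version). -/
def IsMaxFin {A : Type*} (r : A → A → Prop) (w m : List A) : Prop :=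
  m ≠ [] ∧
  (∀ j, j ≤ m.length → IsMaxFacLen r w j (m.take j)) ∧
  (∀ m', IsMaxFacLen r w (m.length + 1) m' → ¬ m <+: m')

/-- `m = min(t)` for an infinite word `t`: each prefix of `m` is the lexicographically
smallest factor of `t` of its length. -/
def IsMinInf {A : Type*} (r : A → A → Prop) (t m : ℕ → A) : Prop :=
  ∀ k, IsFactorInf t (prefixList m k) ∧
    ∀ u, IsFactorInf t u → u.length = k → listLe r (prefixList m k) u

/-- `m = max(t)` for an infinite word `t`. -/
def IsMaxInf {A : Type*} (r : A → A → Prop) (t m : ℕ → A) : Prop :=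
  ∀ k, IsFactorInf t (prefixList m k) ∧
    ∀ u, IsFactorInf t u → u.length = k → listLe r u (prefixList m k)

/-- Prepend a letter to an infinite word. -/
def consInf {A : Type*} (a : A) (t : ℕ → A) : ℕ → A
  | 0 => a
  | n + 1 => t n

/-- Prepend a finite word to an infinite word. -/
def wordAppend {A : Type*} (v : List A) (t : ℕ → A) : ℕ → A :=
  fun n => if h : n < v.length then v.get ⟨n, h⟩ else t (n - v.length)

/-- The pure epistandard morphism `ψ_z` on finite words: it fixes `z` and sends
each letter `x ≠ z` to `zx`. -/
def psiW {A : Type*} [DecidableEq A] (z : A) (w : List A) : List A :=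
  (w.map (fun x => if x = z then [z] else [z, x])).flatten

/-- The finite word `u` is a prefix of the infinite word `t`. -/
def IsPrefixInf {A : Type*} (u : List A) (t : ℕ → A) : Prop := u = prefixList t u.length

/-- `y = f(t)`: the infinite word `y` is the image of the infinite word `t` under the
(non-erasing) morphism `f`, acting letter by letter. -/
def IsMorphImage {A : Type*} (f : List A → List A) (t y : ℕ → A) : Prop :=
  ∀ k, IsPrefixInf (f (prefixList t k)) y

/-- Pure epistandard morphisms: finite compositions of the morphisms `ψ_a`. -/
inductive PureEpistandard {A : Type*} [DecidableEq A] : (List A → List A) → Prop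
  | id : PureEpistandard _root_.id
  | comp (a : A) (f : List A → List A) : PureEpistandard f →
      PureEpistandard (fun w => psiW a (f w))

/-- An infinite word is episkew if it is non-recurrent and all of its factors
are finite episturmian. -/
def Episkew {A : Type*} (t : ℕ → A) : Prop :=
  ¬ Recurrent t ∧ ∀ u, IsFactorInf t u → FiniteEpisturmian u

/- Two-letter (Bool) notions: `false` plays the role of `a`, `true` of `b`,
with the order `false < true`. -/

/-- A finite binary word is balanced. -/
def BalancedList (w : List Bool) : Prop :=
  ∀ u v : List Bool, u <:+: w → v <:+: w → u.length = v.length →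
    |(u.count true : ℤ) - (v.count true : ℤ)| ≤ 1

/-- An infinite binary word is balanced. -/
def BalancedInf (t : ℕ → Bool) : Prop :=
  ∀ u v : List Bool, IsFactorInf t u → IsFactorInf t v → u.length = v.length →
    |(u.count true : ℤ) - (v.count true : ℤ)| ≤ 1

/-- The Sturmian word of slope `α` and intercept `ρ` defined via floors. -/
def SturmianFloor (α ρ : ℝ) (t : ℕ → Bool) : Prop :=
  ∀ n : ℕ, t n = true ↔ ⌊((n : ℝ) + 1) * α + ρ⌋ ≠ ⌊(n : ℝ) * α + ρ⌋

/-- The Sturmian word of slope `α` and intercept `ρ` defined via ceilings. -/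
def SturmianCeil (α ρ : ℝ) (t : ℕ → Bool) : Prop :=
  ∀ n : ℕ, t n = true ↔ ⌈((n : ℝ) + 1) * α + ρ⌉ ≠ ⌈(n : ℝ) * α + ρ⌉

/-- Aperiodic Sturmian words: those of irrational slope. -/
def IsAperiodicSturmian (t : ℕ → Bool) : Prop :=
  ∃ α ρ : ℝ, α ∈ Set.Icc (0 : ℝ) 1 ∧ ρ ∈ Set.Icc (0 : ℝ) 1 ∧ Irrational α ∧
    (SturmianFloor α ρ t ∨ SturmianCeil α ρ t)

/-- Standard Sturmian words: those with `ρ = α`. -/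
def IsStandardSturmian (t : ℕ → Bool) : Prop :=
  ∃ α : ℝ, α ∈ Set.Icc (0 : ℝ) 1 ∧ (SturmianFloor α α t ∨ SturmianCeil α α t)

/-- A fine infinite binary word: `(min(t), max(t)) = (a·s, b·s)` for some infinite word `s`. -/
def FineBool (t : ℕ → Bool) : Prop :=
  ∃ s : ℕ → Bool, IsMinInf (· < ·) t (consInf false s) ∧ IsMaxInf (· < ·) t (consInf true s)

/-- A periodic infinite word. -/
def PeriodicInf {A : Type*} (t : ℕ → A) : Prop := ∃ p, 0 < p ∧ ∀ i, t (i + p) = t i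

/-- An ultimately periodic infinite word. -/
def UltPeriodicInf {A : Type*} (t : ℕ → A) : Prop :=
  ∃ p, 0 < p ∧ ∃ m, ∀ i, m ≤ i → t (i + p) = t i

section Helpers
variable {A : Type*}

lemma factorAt_iff (t : ℕ → A) (u : List A) (i : ℕ) :
    FactorAt t u i ↔ ∀ j (hj : j < u.length), u[j] = t (i + j) := by
  constructor
  · intro h j hj
    rw [List.getElem_of_eq h hj]
    simp
  · intro h
    apply List.ext_getElem (by simp)
    intro n h1 h2
    simpa using h n h1

@[simp] lemma prefixList_length (t : ℕ → A) (k : ℕ) : (prefixList t k).length = k := by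
  simp [prefixList]

@[simp] lemma prefixList_get (t : ℕ → A) (k j : ℕ) (h : j < (prefixList t k).length) :
    (prefixList t k)[j] = t j := by simp [prefixList]

lemma factorAt_prefixList (t : ℕ → A) (k : ℕ) : FactorAt t (prefixList t k) 0 := by
  rw [factorAt_iff]; intro j hj; simp

lemma factorAt_take {t : ℕ → A} {u : List A} {i : ℕ} (h : FactorAt t u i) (m : ℕ) :
    FactorAt t (u.take m) i := by
  rw [factorAt_iff] at h ⊢
  intro j hj
  have hj' : j < u.length := lt_of_lt_of_le hj (by simp)
  rw [List.getElem_take]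
  exact h j hj'

/-- In a standard episturmian word, every right special factor is the reversal
of the corresponding prefix. -/
lemma rightSpecial_rev_prefix {s : ℕ → A} (hs : StdEpisturmian s) {u : List A}
    (hu : RightSpecial s u) : u = (prefixList s u.length).reverse := by
  obtain ⟨a, b, hab, h1, h2⟩ := hu
  have r1 := hs.1.1 _ h1
  have r2 := hs.1.1 _ h2
  rw [List.reverse_append, List.reverse_singleton, List.singleton_append] at r1 r2
  have hls : LeftSpecial s u.reverse := ⟨a, b, hab, r1, r2⟩
  have := hs.2 _ hls
  rw [List.length_reverse] at this
  calc u = u.reverse.reverse := (List.reverse_reverse u).symm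
  _ = (prefixList s u.length).reverse := by rw [this]

/-- A standard episturmian word has arbitrarily long palindromic prefixes. -/
lemma exists_palindromic_prefix {s : ℕ → A} (hs : StdEpisturmian s) (n : ℕ) :
    ∃ M, n ≤ M ∧ (prefixList s M).reverse = prefixList s M := by
  classical
  have hu : IsFactorInf s (prefixList s n) := ⟨0, factorAt_prefixList s n⟩
  obtain ⟨i, hi⟩ := hs.1.1 _ hu
  rw [factorAt_iff] at hi
  set v := prefixList s (i + n) with hv
  have hvlen : v.length = i + n := by simp [hv]
  have hrlen : v.reverse.length = i + n := by simp [hvlen]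
  have hvfac : FactorAt s v 0 := factorAt_prefixList s (i + n)
  by_cases hpal : v.reverse = v
  · exact ⟨i + n, by omega, hpal⟩
  -- values
  have hvget : ∀ j (hj : j < i + n), v[j]'(by omega) = s j := by
    intro j hj; simp [hv]
  have hrget : ∀ j (hj : j < i + n), v.reverse[j]'(by omega) = s (i + n - 1 - j) := by
    intro j hj
    rw [List.getElem_reverse]
    rw [hvget _ (by omega)]
    congr 1
    omega
  -- agreement on the first n letters
  have hagree : ∀ j (hj : j < n), v.reverse[j]'(by omega) = v[j]'(by omega) := by
    intro j hj
    rw [hvget _ (by omega), hrget _ (by omega)]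
    have h3 := hi (n - 1 - j) (by simp; omega)
    have h4 : (prefixList s n).reverse[n - 1 - j]'(by simp; omega) = s j := by
      simp only [List.getElem_reverse, prefixList_get, prefixList_length]
      congr 1
      omega
    rw [h4] at h3
    have : i + n - 1 - j = i + (n - 1 - j) := by omega
    rw [this]
    exact h3.symm
  -- least index of disagreement
  have hex : ∃ c : ℕ, v.reverse[c]? ≠ v[c]? := by
    by_contra hco
    push_neg at hco
    exact hpal (List.ext_getElem? hco)
  let c := Nat.find hex
  have hcP : v.reverse[c]? ≠ v[c]? := Nat.find_spec hex
  have hclt : c < i + n := by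
    by_contra hge
    push_neg at hge
    apply hcP
    rw [List.getElem?_eq_none (by omega), List.getElem?_eq_none (by omega)]
  have hcn : n ≤ c := by
    by_contra hlt
    push_neg at hlt
    apply hcP
    rw [List.getElem?_eq_getElem (l := v.reverse) (by omega),
        List.getElem?_eq_getElem (l := v) (by omega)]
    exact congrArg some (hagree c hlt)
  have hcagree : ∀ j (hj : j < c), v.reverse[j]'(by omega) = v[j]'(by omega) := by
    intro j hj
    have := Nat.find_min hex hj
    rw [not_ne_iff] at this
    rw [List.getElem?_eq_getElem (l := v.reverse) (by omega),
        List.getElem?_eq_getElem (l := v) (by omega)] at this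
    exact Option.some_injective _ this
  have hcd : v.reverse[c]'(by omega) ≠ v[c]'(by omega) := by
    intro h
    apply hcP
    rw [List.getElem?_eq_getElem (l := v.reverse) (by omega),
        List.getElem?_eq_getElem (l := v) (by omega)]
    exact congrArg some h
  -- z = prefixList s c is right special
  set z := prefixList s c with hz
  have hza : FactorAt s (z ++ [v[c]'(by omega)]) 0 := by
    rw [factorAt_iff]
    intro j hj
    simp only [List.length_append, List.length_cons, List.length_nil, prefixList_length, hz] at hj
    rcases lt_or_ge j c with hjc | hjc
    · rw [List.getElem_append_left (by simpa [hz] using hjc)]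
      simp [hz]
    · have hjc' : j = c := by omega
      subst hjc'
      rw [List.getElem_append_right (by simp [hz])]
      simp [hz, hvget _ hclt]
  have hzb : IsFactorInf s (z ++ [v.reverse[c]'(by omega)]) := by
    obtain ⟨i2, hi2⟩ := hs.1.1 v ⟨0, hvfac⟩
    have htake := factorAt_take hi2 (c + 1)
    refine ⟨i2, ?_⟩
    have heq : v.reverse.take (c + 1) = z ++ [v.reverse[c]'(by omega)] := by
      apply List.ext_getElem
      · simp only [List.length_take, List.length_append, List.length_cons,
          List.length_nil, hrlen]
        simp [hz]
        omega
      · intro j h1 h2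
        rw [List.getElem_take]
        simp only [List.length_take, hrlen] at h1
        rcases lt_or_ge j c with hjc | hjc
        · have hjz : j < z.length := by simp [hz]; omega
          rw [List.getElem_append_left hjz]
          rw [hcagree j hjc]
          simp [hz, hvget _ (show j < i + n by omega)]
        · have hjc' : j = c := by omega
          subst hjc'
          have hjz : z.length ≤ c := by simp [hz]
          rw [List.getElem_append_right hjz]
          simp [hz]
    rw [← heq]
    exact htake
  have hrs : RightSpecial s z := ⟨_, _, (Ne.symm hcd), ⟨0, hza⟩, hzb⟩
  have := rightSpecial_rev_prefix hs hrs
  have hzlen : z.length = c := by simp [hz]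
  rw [hzlen] at this
  refine ⟨c, hcn, ?_⟩
  rw [hz] at this
  exact this.symm
/-- The periodic infinite word with period `s_M · x`. -/
def perWord {A : Type*} (s : ℕ → A) (x : A) (M : ℕ) : ℕ → A :=
  fun i => if i % (M + 1) = M then x else s (i % (M + 1))

section PerWord
variable {A : Type*} {s : ℕ → A} {x : A} {M : ℕ}

lemma perWord_mod (s : ℕ → A) (x : A) (M : ℕ) (a : ℕ) :
    perWord s x M a = perWord s x M (a % (M + 1)) := by
  unfold perWord
  rw [Nat.mod_mod_of_dvd a (dvd_refl (M + 1))]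

lemma perWord_congr {a b : ℕ} (h : a % (M + 1) = b % (M + 1)) :
    perWord s x M a = perWord s x M b := by
  simp only [perWord, h]

lemma perWord_eq_x_iff (hx : ∀ n, s n ≠ x) (a : ℕ) :
    perWord s x M a = x ↔ a % (M + 1) = M := by
  constructor
  · intro h
    by_contra hne
    rw [perWord, if_neg hne] at h
    exact hx _ h
  · intro h
    rw [perWord, if_pos h]

lemma perWord_eq_s {a r : ℕ} (h : a % (M + 1) = r) (hr : r < M) :
    perWord s x M a = s r := by
  rw [perWord, h, if_neg (by omega)]

lemma perWord_symm (hx : ∀ n, s n ≠ x) (hpal : ∀ j, j < M → s (M - 1 - j) = s j)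
    {a b : ℕ} (h : (a + b + 2) % (M + 1) = 0) :
    perWord s x M a = perWord s x M b := by
  set N := M + 1 with hN
  set ra := a % N with hra
  set rb := b % N with hrb
  have hraN : ra < N := Nat.mod_lt _ (by omega)
  have hrbN : rb < N := Nat.mod_lt _ (by omega)
  have h2 : (ra + rb + 2) % N = 0 := by
    have hmq : ra + rb + 2 ≡ a + b + 2 [MOD N] :=
      Nat.ModEq.add_right 2 ((Nat.mod_modEq a N).add (Nat.mod_modEq b N))
    exact Eq.trans hmq h
  obtain ⟨q, hq⟩ := Nat.dvd_of_mod_eq_zero h2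
  have hq12 : q = 1 ∨ q = 2 := by
    rcases q with _ | _ | _ | q
    · simp at hq
    · left; rfl
    · right; rfl
    · exfalso
      have h3 : N * (q + 1 + 1 + 1) = N * q + 3 * N := by ring
      omega
  rw [perWord_mod s x M a, perWord_mod s x M b, ← hra, ← hrb]
  rcases hq12 with hq1 | hq2
  · subst hq1
    rw [mul_one] at hq
    have hra' : ra < M := by omega
    have hrb' : rb < M := by omega
    rw [perWord_eq_s (Nat.mod_eq_of_lt (by omega)) hra',
        perWord_eq_s (Nat.mod_eq_of_lt (by omega)) hrb']
    have h4 := hpal ra hra'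
    have hrbeq : rb = M - 1 - ra := by omega
    rw [hrbeq, h4]
  · subst hq2
    have hra' : ra = M := by omega
    have hrb' : rb = M := by omega
    rw [hra', hrb']
lemma perWord_rev_closed (hx : ∀ n, s n ≠ x) (hpal : ∀ j, j < M → s (M - 1 - j) = s j)
    {u : List A} (h : IsFactorInf (perWord s x M) u) :
    IsFactorInf (perWord s x M) u.reverse := by
  obtain ⟨i, hi⟩ := h
  rw [factorAt_iff] at hi
  set N := M + 1 with hN
  set L := u.length with hL
  refine ⟨N * (i + L + 1) - (i + L + 1), ?_⟩
  rw [factorAt_iff]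
  intro j hj
  rw [List.length_reverse] at hj
  rw [List.getElem_reverse]
  rw [hi _ (by omega)]
  apply perWord_symm hx hpal
  have hle : i + L + 1 ≤ N * (i + L + 1) := Nat.le_mul_of_pos_left _ (by omega)
  have hjL : j < L := by omega
  have heq : (i + (u.length - 1 - j) + (N * (i + L + 1) - (i + L + 1) + j)) + 2
      = N * (i + L + 1) := by
    rw [← hL]
    omega
  rw [heq]
  exact Nat.mul_mod_right _ _
lemma rs_perWord (hs : StdEpisturmian s) (hx : ∀ n, s n ≠ x)
    (hpal : ∀ j, j < M → s (M - 1 - j) = s j) {u : List A}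
    (hu : RightSpecial (perWord s x M) u) :
    u = (prefixList s u.length).reverse := by
  classical
  set N := M + 1 with hN
  obtain ⟨cl, dl, hcd, ⟨i, hi⟩, ⟨i', hi'⟩⟩ := hu
  rw [factorAt_iff] at hi hi'
  have hiu : ∀ j (hj : j < u.length), u[j] = perWord s x M (i + j) := by
    intro j hj
    have := hi j (by simp; omega)
    rwa [List.getElem_append_left hj] at this
  have hiu' : ∀ j (hj : j < u.length), u[j] = perWord s x M (i' + j) := by
    intro j hj
    have := hi' j (by simp; omega)
    rwa [List.getElem_append_left hj] at this
  have hic : cl = perWord s x M (i + u.length) := by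
    have := hi u.length (by simp)
    rw [List.getElem_append_right (le_refl _)] at this
    simpa using this
  have hic' : dl = perWord s x M (i' + u.length) := by
    have := hi' u.length (by simp)
    rw [List.getElem_append_right (le_refl _)] at this
    simpa using this
  have hphase : ∀ q, q < u.length → (i + q) % N = M → (i' + q) % N = M → False := by
    intro q hq h1 h2
    have hqq : i + q ≡ i' + q [MOD N] := h1.trans h2.symm
    have hmod : i ≡ i' [MOD N] := Nat.ModEq.add_right_cancel' q hqq
    apply hcd
    rw [hic, hic']
    exact perWord_congr (hmod.add_right u.length)
  rcases Nat.eq_zero_or_pos u.length with hk0 | hkpos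
  · have hnil : u = [] := List.eq_nil_of_length_eq_zero hk0
    rw [hnil]
    simp [prefixList]
  -- Step 1 : u.length ≤ M
  have hkM : u.length ≤ M := by
    by_contra hgt
    push_neg at hgt
    set q := (M + N - i % N) % N with hqdef
    have hiN : i % N < N := Nat.mod_lt _ (by omega)
    have hqk : q < u.length := lt_of_lt_of_le (Nat.mod_lt _ (by omega)) (by omega)
    have h1 : (i + q) % N = M := by
      rw [Nat.add_mod, hqdef, Nat.mod_mod_of_dvd _ (dvd_refl N), Nat.add_mod_mod]
      have he : i % N + (M + N - i % N) = M + N := by omega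
      rw [he, Nat.add_mod_right, Nat.mod_eq_of_lt (by omega)]
    have hux : u[q] = x := by
      rw [hiu q hqk]
      exact (perWord_eq_x_iff hx _).2 h1
    have h2 : (i' + q) % N = M := by
      apply (perWord_eq_x_iff hx _).1
      rw [← hiu' q hqk]
      exact hux
    exact hphase q hqk h1 h2
  -- suffix sublemma: an occurrence followed by x forces u = reversed prefix
  have hsuf : ∀ i0, (∀ j (hj : j < u.length), u[j] = perWord s x M (i0 + j)) →
      perWord s x M (i0 + u.length) = x → u = (prefixList s u.length).reverse := by
    intro i0 hent hxend
    have hmk : (i0 + u.length) % N = M := (perWord_eq_x_iff hx _).1 hxend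
    have hdiv : i0 + u.length = N * ((i0 + u.length) / N) + M := by
      conv_lhs => rw [← Nat.div_add_mod (i0 + u.length) N, hmk]
    apply List.ext_getElem (by simp)
    intro j h1 h2
    rw [List.getElem_reverse, prefixList_get]
    rw [hent j h1]
    have hres : (i0 + j) % N = M - u.length + j := by
      have he : i0 + j = N * ((i0 + u.length) / N) + (M - u.length + j) := by omega
      rw [he, Nat.mul_add_mod, Nat.mod_eq_of_lt (by omega)]
    rw [perWord_eq_s hres (by omega)]
    have h5 := hpal (u.length - 1 - j) (by omega)
    have h6 : M - 1 - (u.length - 1 - j) = M - u.length + j := by omega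
    rw [h6] at h5
    rw [h5]
    congr 1
    simp
  by_cases hclx : cl = x
  · exact hsuf i hiu (by rw [← hic]; exact hclx)
  by_cases hdlx : dl = x
  · exact hsuf i' hiu' (by rw [← hic']; exact hdlx)
  -- both extension letters differ from x: u is x-free
  have hufree : ∀ q (hq : q < u.length), u[q] ≠ x := by
    intro q hq hqx
    have h1 : (i + q) % N = M := (perWord_eq_x_iff hx _).1 (by rw [← hiu q hq]; exact hqx)
    have h2 : (i' + q) % N = M := (perWord_eq_x_iff hx _).1 (by rw [← hiu' q hq]; exact hqx)
    exact hphase q hq h1 h2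
  have hchain : ∀ i0 c0, c0 ≠ x → (∀ j (hj : j < u.length), u[j] = perWord s x M (i0 + j)) →
      perWord s x M (i0 + u.length) = c0 → FactorAt s (u ++ [c0]) (i0 % N) := by
    intro i0 c0 hc0 hent hend
    have hnotx : ∀ j, j ≤ u.length → perWord s x M (i0 + j) ≠ x := by
      intro j hj
      rcases Nat.lt_or_ge j u.length with h | h
      · rw [← hent j h]
        exact hufree j h
      · have hje : j = u.length := by omega
        rw [hje, hend]
        exact hc0
    have hres : ∀ j, j ≤ u.length → (i0 + j) % N = i0 % N + j ∧ i0 % N + j < M := by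
      intro j
      induction j with
      | zero =>
        intro _
        have hb : (i0 + 0) % N = i0 % N := by simp
        refine ⟨hb, ?_⟩
        have hlt : i0 % N < N := Nat.mod_lt _ (by omega)
        have hne : (i0 + 0) % N ≠ M := by
          intro hM
          exact hnotx 0 (by omega) ((perWord_eq_x_iff hx _).2 hM)
        rw [hb] at hne
        omega
      | succ j ih =>
        intro hj
        obtain ⟨e1, e2⟩ := ih (by omega)
        have hstep : (i0 + (j + 1)) % N = i0 % N + (j + 1) := by
          have he : i0 + (j + 1) = N * ((i0 + j) / N) + (i0 % N + j + 1) := by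
            have := Nat.div_add_mod (i0 + j) N
            omega
          rw [he, Nat.mul_add_mod, Nat.mod_eq_of_lt (by omega)]
          omega
        refine ⟨hstep, ?_⟩
        have hlt : i0 % N + (j + 1) < N := by
          rw [← hstep]
          exact Nat.mod_lt _ (by omega)
        have hne : (i0 + (j + 1)) % N ≠ M := by
          intro hM
          exact hnotx (j + 1) hj ((perWord_eq_x_iff hx _).2 hM)
        rw [hstep] at hne
        omega
    rw [factorAt_iff]
    intro j hj
    simp only [List.length_append, List.length_cons, List.length_nil] at hj
    obtain ⟨e1, e2⟩ := hres j (by omega)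
    rcases Nat.lt_or_ge j u.length with h | h
    · rw [List.getElem_append_left h, hent j h]
      exact perWord_eq_s e1 e2
    · have hje : j = u.length := by omega
      subst hje
      rw [List.getElem_append_right (le_refl _)]
      simp only [Nat.sub_self, List.getElem_singleton]
      rw [← hend]
      exact perWord_eq_s e1 e2
  have hrs : RightSpecial s u :=
    ⟨cl, dl, hcd, ⟨_, hchain i cl hclx hiu hic.symm⟩, ⟨_, hchain i' dl hdlx hiu' hic'.symm⟩⟩
  exact rightSpecial_rev_prefix hs hrs

lemma episturmian_perWord (hs : StdEpisturmian s) (hx : ∀ n, s n ≠ x)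
    (hpal : ∀ j, j < M → s (M - 1 - j) = s j) :
    Episturmian (perWord s x M) := by
  constructor
  · exact fun u hu => perWord_rev_closed hx hpal hu
  · intro u v hu hv hlen
    rw [rs_perWord hs hx hpal hu, rs_perWord hs hx hpal hv, hlen]

end PerWord

end Helpers

/-- If `x` is a letter, `s` a standard episturmian word over `A \ {x}`, and
`p ∈ ℕ`, then every factor of the infinite word `s̃_p·x·s` is finite episturmian. -/
theorem factors_of_skew_form_episturmian {A : Type*} [Fintype A] (x : A) (s : ℕ → A)
    (hs : StdEpisturmian s) (hx : ∀ n, s n ≠ x) (p : ℕ) :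
    ∀ u, IsFactorInf (wordAppend ((prefixList s p).reverse ++ [x]) s) u →
      FiniteEpisturmian u := by
  intro u hu
  obtain ⟨i, hi⟩ := hu
  rw [factorAt_iff] at hi
  -- entries of the skew word
  have hW1 : ∀ j, j < p → wordAppend ((prefixList s p).reverse ++ [x]) s j = s (p - 1 - j) := by
    intro j hj
    rw [wordAppend, dif_pos (by simp; omega)]
    rw [List.get_eq_getElem, List.getElem_append_left (by simp; omega), List.getElem_reverse,
      prefixList_get]
    congr 1
    simp
  have hW2 : wordAppend ((prefixList s p).reverse ++ [x]) s p = x := by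
    rw [wordAppend, dif_pos (by simp)]
    rw [List.get_eq_getElem, List.getElem_append_right (by simp)]
    simp
  have hW3 : ∀ j, wordAppend ((prefixList s p).reverse ++ [x]) s (p + 1 + j) = s j := by
    intro j
    rw [wordAppend, dif_neg (by simp; omega)]
    congr 1
    simp
  rcases Nat.lt_or_ge i (p + 1) with hip | hip
  rcases Nat.lt_or_ge p (i + u.length) with hstrad | hinside
  · -- straddling occurrence: use the periodic episturmian word
    obtain ⟨M, hM, hpal0⟩ := exists_palindromic_prefix hs (p + u.length + 1)
    have hpal : ∀ j, j < M → s (M - 1 - j) = s j := by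
      intro j hj
      have hj1 : j < ((prefixList s M).reverse).length := by simp; omega
      have := List.getElem_of_eq hpal0 hj1
      rw [List.getElem_reverse, prefixList_get, prefixList_get] at this
      have h7 : (prefixList s M).length - 1 - j = M - 1 - j := by simp
      rw [h7] at this
      exact this
    refine ⟨perWord s x M, episturmian_perWord hs hx hpal, M - (p - i), ?_⟩
    rw [factorAt_iff]
    intro j hj
    rw [hi j hj]
    rcases Nat.lt_trichotomy (i + j) p with hlt | heq | hgt
    · -- before the x
      rw [hW1 (i + j) (by omega)]
      have ha : (M - (p - i) + j) % (M + 1) = M - (p - i) + j := Nat.mod_eq_of_lt (by omega)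
      rw [perWord_eq_s ha (by omega)]
      have h5 := hpal (p - i - 1 - j) (by omega)
      have h6 : M - 1 - (p - i - 1 - j) = M - (p - i) + j := by omega
      rw [h6] at h5
      rw [h5]
      congr 1
      omega
    · -- at the x
      have he : i + j = p := heq
      rw [he, hW2]
      have ha : M - (p - i) + j = M := by omega
      rw [ha]
      exact ((perWord_eq_x_iff hx _).2 (Nat.mod_eq_of_lt (by omega))).symm
    · -- after the x
      have he : i + j = p + 1 + (i + j - p - 1) := by omega
      rw [he, hW3]
      have ha : (M - (p - i) + j) % (M + 1) = i + j - p - 1 := by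
        have he2 : M - (p - i) + j = (M + 1) + (i + j - p - 1) := by omega
        rw [he2, Nat.add_mod_left, Nat.mod_eq_of_lt (by omega)]
      rw [perWord_eq_s ha (by omega)]
  · -- occurrence inside the reversed prefix: u.reverse is a factor of s
    have hrev : FactorAt s u.reverse (p - u.length - i) := by
      rw [factorAt_iff]
      intro j hj
      rw [List.length_reverse] at hj
      rw [List.getElem_reverse, hi _ (by omega)]
      rw [hW1 _ (by omega)]
      congr 1
      omega
    have := hs.1.1 u.reverse ⟨_, hrev⟩
    rw [List.reverse_reverse] at this
    exact ⟨s, hs.1, this⟩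
  · -- occurrence inside s
    refine ⟨s, hs.1, i - (p + 1), ?_⟩
    rw [factorAt_iff]
    intro j hj
    rw [hi j hj]
    have he : i + j = p + 1 + (i - (p + 1) + j) := by omega
    rw [he, hW3]
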